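/- Let α ∈ (0,1). There exist universal constants A and L₀ ≥ 2 such that for all L ≥ L₀ and all x, y ∈ ℝ² with x₁, x₂ > 0, y₁ ≥ L|x|, y₂ ≥ L|x|: the kernel K₁(x,y) = (x₂−y₂)/|x−y|^{2+2α} − (x₂−y₂)/|x̃−y|^{2+2α} − (x₂+y₂)/|x̄−y|^{2+2α} + (x₂+y₂)/|x+y|^{2+2α} satisfies K₁(x,y) = −8(1+α) x₁ y₁ y₂ |y|^{−4−2α} (1 + f₁(x,y)) with |f₁(x,y)| ≤ A L^{−1}. -/

import Mathlib

open Real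

open Set


noncomputable def gk (β a b : ℝ) : ℝ := b * (a^2 + b^2) ^ (-β)
noncomputable def Pk (β a b : ℝ) : ℝ := (-2*β) * b * (a * (a^2 + b^2) ^ (-β-1))
noncomputable def Pd (β a b : ℝ) : ℝ :=
  (-2*β) * b * ((a^2+b^2)^(-β-1) + a * ((2*a) * ((-β-1) * (a^2+b^2)^(-β-1-1))))

lemma Pk_symm (β a b : ℝ) : Pk β a b = Pk β b a := by
  unfold Pk; rw [add_comm (a^2)]; ring

lemma gk_deriv (β b a : ℝ) (h : a^2 + b^2 ≠ 0) :
    HasDerivAt (fun s => gk β s b) (Pk β a b) a := by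
  have h1 : HasDerivAt (fun s : ℝ => s^2 + b^2) (2*a) a := by
    simpa using ((hasDerivAt_pow 2 a).add_const (b^2))
  have h2 := (h1.rpow_const (p := -β) (Or.inl h)).const_mul b
  exact h2.congr_deriv (by unfold Pk; ring)

lemma Pk_deriv (β b a : ℝ) (h : a^2 + b^2 ≠ 0) :
    HasDerivAt (fun s => Pk β s b) (Pd β a b) a := by
  have h1 : HasDerivAt (fun s : ℝ => s^2 + b^2) (2*a) a := by
    simpa using ((hasDerivAt_pow 2 a).add_const (b^2))
  have h2 := h1.rpow_const (p := -β-1) (Or.inl h)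
  have h3 := ((hasDerivAt_id a).mul h2).const_mul ((-2*β) * b)
  exact h3.congr_deriv (by simp only [id_eq, Pd]; ring)

lemma mvt_bound {f f' : ℝ → ℝ} {C a b : ℝ}
    (hf : ∀ x ∈ Set.uIcc a b, HasDerivAt f (f' x) x)
    (hC : ∀ x ∈ Set.uIcc a b, |f' x| ≤ C) : |f b - f a| ≤ C * |b - a| := by
  have := Convex.norm_image_sub_le_of_norm_hasDerivWithin_le
    (f := f) (f' := f') (s := Set.uIcc a b)
    (fun x hx => (hf x hx).hasDerivWithinAt)
    (fun x hx => by rw [Real.norm_eq_abs]; exact hC x hx)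
    (convex_uIcc a b) (Set.left_mem_uIcc) (Set.right_mem_uIcc)
  simpa [Real.norm_eq_abs] using this

lemma Pd_bound (β m a b : ℝ) (hβ1 : 1 ≤ β) (hβ2 : β ≤ 2) (hm : 0 < m)
    (hQ : m ≤ a^2 + b^2) : |Pd β a b| ≤ 28 * m ^ (-β-1/2) := by
  set Q := a^2 + b^2 with hQdef
  have hQ0 : 0 < Q := lt_of_lt_of_le hm hQ
  have comb : ∀ c d : ℝ, Q ^ c * Q ^ d = Q ^ (c+d) := fun c d => (Real.rpow_add hQ0 c d).symm
  have hb : |b| ≤ Q ^ ((1:ℝ)/2) := by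
    rw [← Real.sqrt_eq_rpow, ← Real.sqrt_sq_eq_abs]
    exact Real.sqrt_le_sqrt (by nlinarith [sq_nonneg a])
  have ha : a^2 ≤ Q ^ (1:ℝ) := by rw [Real.rpow_one]; nlinarith [sq_nonneg b]
  have hp1 : (0:ℝ) < Q ^ (-β-1) := Real.rpow_pos_of_pos hQ0 _
  have hp2 : (0:ℝ) < Q ^ (-β-1-1) := Real.rpow_pos_of_pos hQ0 _
  have hsplit : Pd β a b =
      (-2*β) * b * Q^(-β-1) + (-2*β*(-β-1)*2) * (a^2 * (b * Q^(-β-1-1))) := by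
    unfold Pd; ring
  have hT1 : |(-2*β) * b * Q^(-β-1)| ≤ 2*β * (Q^((1:ℝ)/2) * Q^(-β-1)) := by
    rw [abs_mul, abs_mul, abs_of_pos hp1]
    have : |(-2*β)| = 2*β := by rw [abs_of_nonpos (by linarith)]; ring
    rw [this]
    have := mul_le_mul_of_nonneg_right hb hp1.le
    nlinarith
  have hT2 : |(-2*β*(-β-1)*2) * (a^2 * (b * Q^(-β-1-1)))| ≤
      (4*β*(β+1)) * (Q^(1:ℝ) * (Q^((1:ℝ)/2) * Q^(-β-1-1))) := by
    have e : |(-2*β*(-β-1)*2) * (a^2 * (b * Q^(-β-1-1)))|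
        = (4*β*(β+1)) * (a^2 * (|b| * Q^(-β-1-1))) := by
      simp only [abs_mul, abs_of_pos hp2, abs_of_nonneg (sq_nonneg a),
        abs_of_nonpos (show -2*β ≤ 0 by linarith),
        abs_of_nonpos (show -β-(1:ℝ) ≤ 0 by linarith), abs_two]
      ring
    rw [e]
    have h := mul_le_mul ha (mul_le_mul_of_nonneg_right hb hp2.le)
      (by positivity) (by positivity)
    exact mul_le_mul_of_nonneg_left h (by positivity)
  have e1 : Q^((1:ℝ)/2) * Q^(-β-1) = Q ^ (-β-1/2) := by rw [comb]; ring_nf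
  have e2 : Q^(1:ℝ) * (Q^((1:ℝ)/2) * Q^(-β-1-1)) = Q ^ (-β-1/2) := by
    rw [comb, comb]; ring_nf
  have hQm : Q ^ (-β-1/2) ≤ m ^ (-β-1/2) :=
    Real.rpow_le_rpow_of_nonpos hm hQ (by linarith)
  have hQp : (0:ℝ) < Q ^ (-β-1/2) := Real.rpow_pos_of_pos hQ0 _
  calc |Pd β a b| ≤ |(-2*β) * b * Q^(-β-1)| +
        |(-2*β*(-β-1)*2) * (a^2 * (b * Q^(-β-1-1)))| := by rw [hsplit]; exact abs_add_le _ _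
    _ ≤ 2*β * (Q^((1:ℝ)/2) * Q^(-β-1)) +
        (4*β*(β+1)) * (Q^(1:ℝ) * (Q^((1:ℝ)/2) * Q^(-β-1-1))) := by linarith
    _ = (2*β + 4*β*(β+1)) * Q ^ (-β-1/2) := by rw [e1, e2]; ring
    _ ≤ 28 * Q ^ (-β-1/2) := by
        have h : 2*β + 4*β*(β+1) ≤ 28 := by nlinarith
        exact mul_le_mul_of_nonneg_right h hQp.le
    _ ≤ 28 * m ^ (-β-1/2) := by linarith

lemma Pk_rect (β m a b a' b' : ℝ) (hβ1 : 1 ≤ β) (hβ2 : β ≤ 2) (hm : 0 < m)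
    (h1 : ∀ v ∈ Set.uIcc b b', m ≤ a^2 + v^2)
    (h2 : ∀ u ∈ Set.uIcc a a', m ≤ u^2 + b'^2) :
    |Pk β a' b' - Pk β a b| ≤ 28 * m ^ (-β-1/2) * (|a' - a| + |b' - b|) := by
  have hstep1 : |Pk β a b' - Pk β a b| ≤ 28 * m ^ (-β-1/2) * |b' - b| := by
    have key := mvt_bound (f := fun v => Pk β v a) (f' := fun v => Pd β v a) (a := b) (b := b')
      (fun v hv => Pk_deriv β a v (by have := h1 v hv; nlinarith))
      (fun v hv => Pd_bound β m v a hβ1 hβ2 hm (by have := h1 v hv; linarith))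
    calc |Pk β a b' - Pk β a b| = |Pk β b' a - Pk β b a| := by
          rw [Pk_symm β a b', Pk_symm β a b]
      _ ≤ 28 * m ^ (-β-1/2) * |b' - b| := key
  have hstep2 : |Pk β a' b' - Pk β a b'| ≤ 28 * m ^ (-β-1/2) * |a' - a| :=
    mvt_bound (f := fun u => Pk β u b') (f' := fun u => Pd β u b')
      (fun u hu => Pk_deriv β b' u (by have := h2 u hu; nlinarith))
      (fun u hu => Pd_bound β m u b' hβ1 hβ2 hm (h2 u hu))
  calc |Pk β a' b' - Pk β a b| ≤ |Pk β a' b' - Pk β a b'| + |Pk β a b' - Pk β a b| :=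
      abs_sub_le _ _ _
    _ ≤ 28 * m ^ (-β-1/2) * (|a' - a| + |b' - b|) := by rw [mul_add]; linarith

lemma abs4 (p q r t : ℝ) : |p - q - r + t| ≤ |p| + |q| + |r| + |t| := by
  calc |p - q - r + t| ≤ |p - q - r| + |t| := abs_add_le _ _
    _ ≤ (|p - q| + |r|) + |t| := by linarith [abs_sub (p - q) r]
    _ ≤ |p| + |q| + |r| + |t| := by linarith [abs_sub p q]

lemma gk_eq (α a b : ℝ) :
    b / Real.sqrt (a^2 + b^2) ^ (2 + 2*α) = gk (1+α) a b := by
  have hq : (0:ℝ) ≤ a^2 + b^2 := by positivity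
  unfold gk
  rw [Real.sqrt_eq_rpow, ← Real.rpow_mul hq,
    show (1/2:ℝ) * (2 + 2*α) = 1 + α by ring,
    Real.rpow_neg hq, div_eq_mul_inv]

set_option maxHeartbeats 8000000 in
/-- pointwise asymptotics for the symmetrized kernel K₁ (equation (2.16)). -/
theorem stmt_7 (α : ℝ) (hα : 0 < α) (hα1 : α < 1) :
    ∃ A > 0, ∃ L0 : ℝ, 2 ≤ L0 ∧ ∀ L : ℝ, L0 ≤ L →
      ∀ x1 x2 y1 y2 : ℝ, 0 < x1 → 0 < x2 →
        L * Real.sqrt (x1 ^ 2 + x2 ^ 2) ≤ y1 →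
        L * Real.sqrt (x1 ^ 2 + x2 ^ 2) ≤ y2 →
        ∃ f1 : ℝ, |f1| ≤ A / L ∧
          (x2 - y2) / (Real.sqrt ((x1 - y1) ^ 2 + (x2 - y2) ^ 2)) ^ (2 + 2 * α)
            - (x2 - y2) / (Real.sqrt ((x1 + y1) ^ 2 + (x2 - y2) ^ 2)) ^ (2 + 2 * α)
            - (x2 + y2) / (Real.sqrt ((x1 - y1) ^ 2 + (x2 + y2) ^ 2)) ^ (2 + 2 * α)
            + (x2 + y2) / (Real.sqrt ((x1 + y1) ^ 2 + (x2 + y2) ^ 2)) ^ (2 + 2 * α)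
          = -8 * (1 + α) * x1 * y1 * y2
              * (Real.sqrt (y1 ^ 2 + y2 ^ 2)) ^ (-4 - 2 * α) * (1 + f1) := by
  refine ⟨4000, by norm_num, 2, le_refl 2, ?_⟩
  intro L hL x1 x2 y1 y2 hx1 hx2 hy1 hy2
  have hβ1 : (1:ℝ) ≤ 1 + α := by linarith
  have hβ2 : (1:ℝ) + α ≤ 2 := by linarith
  have hr0 : 0 < Real.sqrt (x1^2+x2^2) := Real.sqrt_pos.mpr (by positivity)
  set r := Real.sqrt (x1^2+x2^2) with hrdef
  have hx1r : x1 ≤ r := by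
    rw [hrdef]; exact Real.le_sqrt_of_sq_le (by nlinarith [sq_nonneg x2])
  have hx2r : x2 ≤ r := by
    rw [hrdef]; exact Real.le_sqrt_of_sq_le (by nlinarith [sq_nonneg x1])
  have hL0 : (0:ℝ) < L := by linarith
  have h2x1 : 2*x1 ≤ y1 := by nlinarith [mul_nonneg (show (0:ℝ) ≤ L - 2 by linarith) hr0.le]
  have h2x2 : 2*x2 ≤ y2 := by nlinarith [mul_nonneg (show (0:ℝ) ≤ L - 2 by linarith) hr0.le]
  have hy1p : 0 < y1 := by nlinarith
  have hy2p : 0 < y2 := by nlinarith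
  have hS0 : (0:ℝ) < y1^2+y2^2 := by positivity
  set m := (y1^2+y2^2)/4 with hmdef
  have hm : 0 < m := by rw [hmdef]; positivity
  set μ := m ^ (-(1+α)-1/2) with hμdef
  have hμ0 : 0 < μ := Real.rpow_pos_of_pos hm _
  set ν := (y1^2+y2^2) ^ (-(1+α)-1) with hνdef
  have hν0 : 0 < ν := Real.rpow_pos_of_pos hS0 _
  set H : ℝ → ℝ := fun s => gk (1+α) (s-y1) (x2-y2) - gk (1+α) (s+y1) (x2-y2)
      - gk (1+α) (s-y1) (x2+y2) + gk (1+α) (s+y1) (x2+y2) with hH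
  set D : ℝ → ℝ → ℝ := fun s t => Pk (1+α) (s-y1) (t-y2) - Pk (1+α) (s+y1) (t-y2)
      - Pk (1+α) (s-y1) (t+y2) + Pk (1+α) (s+y1) (t+y2) with hD
  clear_value r m μ ν H D
  have hmem : ∀ s ∈ Set.uIcc (0:ℝ) x1, 0 ≤ s ∧ s ≤ x1 := by
    intro s hs
    rcases Set.mem_uIcc.mp hs with ⟨h,h'⟩|⟨h,h'⟩
    · exact ⟨h,h'⟩
    · constructor <;> linarith
  -- derivative of H
  have hHd : ∀ s ∈ Set.uIcc (0:ℝ) x1, HasDerivAt H (D s x2) s := by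
    intro s hs
    obtain ⟨hs0, hs1⟩ := hmem s hs
    have hm1 : ∀ b : ℝ, (s-y1)^2 + b^2 ≠ 0 := by
      intro b
      have h1 : x1 ≤ y1 - s := by linarith
      have h2 := mul_le_mul h1 h1 hx1.le (by linarith)
      nlinarith [sq_nonneg b]
    have hm2 : ∀ b : ℝ, (s+y1)^2 + b^2 ≠ 0 := by
      intro b
      have h1 : y1 ≤ s + y1 := by linarith
      have h2 := mul_le_mul h1 h1 hy1p.le (by linarith)
      nlinarith [sq_nonneg b]
    have d1 : HasDerivAt (fun u => gk (1+α) (u-y1) (x2-y2)) (Pk (1+α) (s-y1) (x2-y2)) s := by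
      have := (gk_deriv (1+α) (x2-y2) (s-y1) (hm1 _)).comp s ((hasDerivAt_id s).sub_const y1)
      simpa [Function.comp_def] using this
    have d2 : HasDerivAt (fun u => gk (1+α) (u+y1) (x2-y2)) (Pk (1+α) (s+y1) (x2-y2)) s := by
      have := (gk_deriv (1+α) (x2-y2) (s+y1) (hm2 _)).comp s ((hasDerivAt_id s).add_const y1)
      simpa [Function.comp_def] using this
    have d3 : HasDerivAt (fun u => gk (1+α) (u-y1) (x2+y2)) (Pk (1+α) (s-y1) (x2+y2)) s := by
      have := (gk_deriv (1+α) (x2+y2) (s-y1) (hm1 _)).comp s ((hasDerivAt_id s).sub_const y1)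
      simpa [Function.comp_def] using this
    have d4 : HasDerivAt (fun u => gk (1+α) (u+y1) (x2+y2)) (Pk (1+α) (s+y1) (x2+y2)) s := by
      have := (gk_deriv (1+α) (x2+y2) (s+y1) (hm2 _)).comp s ((hasDerivAt_id s).add_const y1)
      simpa [Function.comp_def] using this
    have := ((d1.sub d2).sub d3).add d4
    rw [hH, hD]; exact this
  -- bound on |D s x2 - D 0 0|
  have hDb : ∀ s ∈ Set.uIcc (0:ℝ) x1, |D s x2 - D 0 0| ≤ 112*μ*(x1+x2) := by
    intro s hs
    obtain ⟨hs0, hs1⟩ := hmem s hs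
    have hbase : ∀ X : ℝ, |X| ≤ 28 * m ^ (-(1+α)-1/2) * (s + x2) → |X| ≤ 28*μ*(x1+x2) := by
      intro X hX
      rw [← hμdef] at hX
      calc |X| ≤ 28*μ*(s+x2) := hX
        _ ≤ 28*μ*(x1+x2) := by
            have := mul_le_mul_of_nonneg_left (show s + x2 ≤ x1 + x2 by linarith)
              (show (0:ℝ) ≤ 28*μ by linarith)
            linarith
    have R1 : |Pk (1+α) (s-y1) (x2-y2) - Pk (1+α) (0-y1) (0-y2)| ≤ 28*μ*(x1+x2) := by
      apply hbase
      have := Pk_rect (1+α) m (0-y1) (0-y2) (s-y1) (x2-y2) hβ1 hβ2 hm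
        (by
          intro v hv
          have hv' : v ≤ x2 - y2 := by
            rcases Set.mem_uIcc.mp hv with ⟨h,h'⟩|⟨h,h'⟩ <;> linarith
          have h1 : y2/2 ≤ -v := by linarith
          have h2 := mul_le_mul h1 h1 (by linarith) (by linarith)
          rw [hmdef]; nlinarith [sq_nonneg y1])
        (by
          intro u hu
          have hu' : u ≤ s - y1 := by
            rcases Set.mem_uIcc.mp hu with ⟨h,h'⟩|⟨h,h'⟩ <;> linarith
          have h1 : y1/2 ≤ -u := by linarith
          have h2 := mul_le_mul h1 h1 (by linarith) (by linarith)
          have h3 : y2/2 ≤ y2 - x2 := by linarith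
          have h4 := mul_le_mul h3 h3 (by linarith) (by linarith)
          rw [hmdef]; nlinarith)
      rw [show (s-y1) - (0-y1) = s by ring, show (x2-y2) - (0-y2) = x2 by ring,
        abs_of_nonneg hs0, abs_of_nonneg hx2.le] at this
      exact this
    have R2 : |Pk (1+α) (s+y1) (x2-y2) - Pk (1+α) (0+y1) (0-y2)| ≤ 28*μ*(x1+x2) := by
      apply hbase
      have := Pk_rect (1+α) m (0+y1) (0-y2) (s+y1) (x2-y2) hβ1 hβ2 hm
        (by
          intro v hv
          have hv' : v ≤ x2 - y2 := by
            rcases Set.mem_uIcc.mp hv with ⟨h,h'⟩|⟨h,h'⟩ <;> linarith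
          have h1 : y2/2 ≤ -v := by linarith
          have h2 := mul_le_mul h1 h1 (by linarith) (by linarith)
          rw [hmdef]; nlinarith [sq_nonneg y1])
        (by
          intro u hu
          have hu' : y1 ≤ u := by
            rcases Set.mem_uIcc.mp hu with ⟨h,h'⟩|⟨h,h'⟩ <;> linarith
          have h2 := mul_le_mul hu' hu' hy1p.le (by linarith)
          have h3 : y2/2 ≤ y2 - x2 := by linarith
          have h4 := mul_le_mul h3 h3 (by linarith) (by linarith)
          rw [hmdef]; nlinarith)
      rw [show (s+y1) - (0+y1) = s by ring, show (x2-y2) - (0-y2) = x2 by ring,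
        abs_of_nonneg hs0, abs_of_nonneg hx2.le] at this
      exact this
    have R3 : |Pk (1+α) (s-y1) (x2+y2) - Pk (1+α) (0-y1) (0+y2)| ≤ 28*μ*(x1+x2) := by
      apply hbase
      have := Pk_rect (1+α) m (0-y1) (0+y2) (s-y1) (x2+y2) hβ1 hβ2 hm
        (by
          intro v hv
          have hv' : y2 ≤ v := by
            rcases Set.mem_uIcc.mp hv with ⟨h,h'⟩|⟨h,h'⟩ <;> linarith
          have h2 := mul_le_mul hv' hv' hy2p.le (by linarith)
          rw [hmdef]; nlinarith [sq_nonneg y1])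
        (by
          intro u hu
          have hu' : u ≤ s - y1 := by
            rcases Set.mem_uIcc.mp hu with ⟨h,h'⟩|⟨h,h'⟩ <;> linarith
          have h1 : y1/2 ≤ -u := by linarith
          have h2 := mul_le_mul h1 h1 (by linarith) (by linarith)
          have h3 : y2 ≤ x2 + y2 := by linarith
          have h4 := mul_le_mul h3 h3 hy2p.le (by linarith)
          rw [hmdef]; nlinarith)
      rw [show (s-y1) - (0-y1) = s by ring, show (x2+y2) - (0+y2) = x2 by ring,
        abs_of_nonneg hs0, abs_of_nonneg hx2.le] at this
      exact this
    have R4 : |Pk (1+α) (s+y1) (x2+y2) - Pk (1+α) (0+y1) (0+y2)| ≤ 28*μ*(x1+x2) := by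
      apply hbase
      have := Pk_rect (1+α) m (0+y1) (0+y2) (s+y1) (x2+y2) hβ1 hβ2 hm
        (by
          intro v hv
          have hv' : y2 ≤ v := by
            rcases Set.mem_uIcc.mp hv with ⟨h,h'⟩|⟨h,h'⟩ <;> linarith
          have h2 := mul_le_mul hv' hv' hy2p.le (by linarith)
          rw [hmdef]; nlinarith [sq_nonneg y1])
        (by
          intro u hu
          have hu' : y1 ≤ u := by
            rcases Set.mem_uIcc.mp hu with ⟨h,h'⟩|⟨h,h'⟩ <;> linarith
          have h2 := mul_le_mul hu' hu' hy1p.le (by linarith)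
          have h3 : y2 ≤ x2 + y2 := by linarith
          have h4 := mul_le_mul h3 h3 hy2p.le (by linarith)
          rw [hmdef]; nlinarith)
      rw [show (s+y1) - (0+y1) = s by ring, show (x2+y2) - (0+y2) = x2 by ring,
        abs_of_nonneg hs0, abs_of_nonneg hx2.le] at this
      exact this
    have hexp : D s x2 - D 0 0 =
        (Pk (1+α) (s-y1) (x2-y2) - Pk (1+α) (0-y1) (0-y2))
        - (Pk (1+α) (s+y1) (x2-y2) - Pk (1+α) (0+y1) (0-y2))
        - (Pk (1+α) (s-y1) (x2+y2) - Pk (1+α) (0-y1) (0+y2))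
        + (Pk (1+α) (s+y1) (x2+y2) - Pk (1+α) (0+y1) (0+y2)) := by
      simp only [hD]; ring
    rw [hexp]
    have h4 := abs4 (Pk (1+α) (s-y1) (x2-y2) - Pk (1+α) (0-y1) (0-y2))
      (Pk (1+α) (s+y1) (x2-y2) - Pk (1+α) (0+y1) (0-y2))
      (Pk (1+α) (s-y1) (x2+y2) - Pk (1+α) (0-y1) (0+y2))
      (Pk (1+α) (s+y1) (x2+y2) - Pk (1+α) (0+y1) (0+y2))
    linarith
  -- H 0 = 0
  have hH0 : H 0 = 0 := by
    simp only [hH]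
    rw [show ((0:ℝ)-y1) = -y1 by ring, show ((0:ℝ)+y1) = y1 by ring]
    unfold gk
    simp only [neg_sq]
    ring
  -- MVT
  have hKC : |H x1 - x1 * D 0 0| ≤ (112*μ*(x1+x2)) * x1 := by
    have key := mvt_bound (f := fun s => H s - s * D 0 0) (f' := fun s => D s x2 - D 0 0)
      (a := 0) (b := x1)
      (fun s hs => (hHd s hs).sub (by simpa using (hasDerivAt_id s).mul_const (D 0 0)))
      (fun s hs => hDb s hs)
    simpa [hH0, abs_of_pos hx1] using key
  -- value of D 0 0
  have hD00 : D 0 0 = -(8*(1+α))*(y1*(y2*ν)) := by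
    simp only [hD]
    unfold Pk
    rw [hνdef]
    rw [show ((0:ℝ)-y1) = -y1 by ring, show ((0:ℝ)+y1) = y1 by ring,
        show ((0:ℝ)-y2) = -y2 by ring, show ((0:ℝ)+y2) = y2 by ring]
    simp only [neg_sq]
    ring
  set C := -(8*(1+α))*(x1*(y1*(y2*ν))) with hCdef
  have hCpos : 0 < 8*(1+α)*(x1*(y1*(y2*ν))) :=
    mul_pos (by linarith) (mul_pos hx1 (mul_pos hy1p (mul_pos hy2p hν0)))
  have hClt : C < 0 := by rw [hCdef]; nlinarith
  have hCabs : |C| = 8*(1+α)*(x1*(y1*(y2*ν))) := by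
    rw [abs_of_neg hClt, hCdef]; ring
  have hCx : x1 * D 0 0 = C := by rw [hD00, hCdef]; ring
  clear_value C
  refine ⟨(H x1 - C)/C, ?_, ?_⟩
  · -- the bound
    rw [abs_div, div_le_div_iff₀ (abs_pos.mpr hClt.ne) hL0, hCabs]
    have hKC' : |H x1 - C| ≤ 112*μ*(x1+x2)*x1 := by rw [← hCx]; linarith [hKC]
    -- μ ≤ 64*((y1+y2)*ν)
    have hμeq : μ = (y1^2+y2^2) ^ (-(1+α)-1/2) * (4:ℝ) ^ ((1+α)+1/2) := by
      rw [hμdef, hmdef, div_eq_mul_inv,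
        Real.mul_rpow hS0.le (by norm_num),
        Real.inv_rpow (by norm_num : (0:ℝ) ≤ 4),
        ← Real.rpow_neg (by norm_num : (0:ℝ) ≤ 4)]
      ring_nf
    have h64 : (4:ℝ) ^ ((1+α)+1/2) ≤ 64 := by
      have h1 : (4:ℝ) ^ ((1+α)+1/2) ≤ (4:ℝ) ^ ((3:ℕ):ℝ) :=
        Real.rpow_le_rpow_of_exponent_le (by norm_num) (by push_cast; linarith)
      have h2 : (4:ℝ) ^ ((3:ℕ):ℝ) = 64 := by rw [Real.rpow_natCast]; norm_num
      linarith
    have hSsplit : (y1^2+y2^2:ℝ) ^ (-(1+α)-1/2) = (y1^2+y2^2) ^ ((1:ℝ)/2) * ν := by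
      rw [hνdef, ← Real.rpow_add hS0]; ring_nf
    have hsq : (y1^2+y2^2:ℝ) ^ ((1:ℝ)/2) ≤ y1+y2 := by
      rw [← Real.sqrt_eq_rpow,
        show y1+y2 = Real.sqrt ((y1+y2)^2) from (Real.sqrt_sq (by linarith)).symm]
      exact Real.sqrt_le_sqrt (by nlinarith)
    have hμν : μ ≤ 64*((y1+y2)*ν) := by
      rw [hμeq, hSsplit]
      have := mul_le_mul (mul_le_mul_of_nonneg_right hsq hν0.le) h64
        (Real.rpow_nonneg (by norm_num) _)
        (mul_nonneg (by linarith) hν0.le)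
      linarith
    -- final chain
    have k1 : L*(x1+x2) ≤ 2*(L*r) := by
      have := mul_le_mul_of_nonneg_left (show x1+x2 ≤ 2*r by linarith) hL0.le
      linarith
    have k2 : μ*(L*(x1+x2)) ≤ (64*((y1+y2)*ν)) * (2*(L*r)) :=
      mul_le_mul hμν k1 (mul_nonneg hL0.le (by linarith))
        (mul_nonneg (by norm_num) (mul_nonneg (by linarith) hν0.le))
    have k3 : (y1+y2)*(L*r) ≤ 2*(y1*y2) := by
      linarith [mul_le_mul_of_nonneg_left hy1 hy2p.le, mul_le_mul_of_nonneg_left hy2 hy1p.le]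
    have k4a : 128*ν*((y1+y2)*(L*r)) ≤ 128*ν*(2*(y1*y2)) :=
      mul_le_mul_of_nonneg_left k3 (by linarith)
    have k4 : μ*(L*(x1+x2)) ≤ 256*(ν*(y1*y2)) := by linarith [k2, k4a]
    have k5 : 112*x1*(μ*(L*(x1+x2))) ≤ 112*x1*(256*(ν*(y1*y2))) :=
      mul_le_mul_of_nonneg_left k4 (by linarith)
    have k6 : (0:ℝ) ≤ x1*(y1*(y2*ν)) :=
      mul_nonneg hx1.le (mul_nonneg hy1p.le (mul_nonneg hy2p.le hν0.le))
    have k0 : |H x1 - C| * L ≤ (112*μ*(x1+x2)*x1) * L :=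
      mul_le_mul_of_nonneg_right hKC' hL0.le
    linarith [k0, k5, k6, mul_nonneg hα.le k6]
  · -- equality
    have hLHS : (x2 - y2) / (Real.sqrt ((x1 - y1) ^ 2 + (x2 - y2) ^ 2)) ^ (2 + 2 * α)
        - (x2 - y2) / (Real.sqrt ((x1 + y1) ^ 2 + (x2 - y2) ^ 2)) ^ (2 + 2 * α)
        - (x2 + y2) / (Real.sqrt ((x1 - y1) ^ 2 + (x2 + y2) ^ 2)) ^ (2 + 2 * α)
        + (x2 + y2) / (Real.sqrt ((x1 + y1) ^ 2 + (x2 + y2) ^ 2)) ^ (2 + 2 * α) = H x1 := by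
      rw [gk_eq α (x1-y1) (x2-y2), gk_eq α (x1+y1) (x2-y2), gk_eq α (x1-y1) (x2+y2),
        gk_eq α (x1+y1) (x2+y2)]
      simp only [hH]
    have hC0 : -8 * (1 + α) * x1 * y1 * y2 * (Real.sqrt (y1 ^ 2 + y2 ^ 2)) ^ (-4 - 2*α) = C := by
      rw [hCdef, hνdef, Real.sqrt_eq_rpow, ← Real.rpow_mul hS0.le,
        show (1/2:ℝ) * (-4 - 2*α) = -(1+α)-1 by ring]
      ring
    rw [hLHS, hC0, mul_add, mul_one, mul_comm C ((H x1 - C)/C),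
      div_mul_cancel₀ _ hClt.ne]
    ring
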